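/- For any composition ν = (ν_1,...,ν_m) of n and any integers k_1,...,k_m, there exists a function h: Word(ν) → ℤ such that q^{k_1ν_1 + ··· + k_mν_m} [n choose ν]_q = Σ_{w ∈ Word(ν)} q^{n·h(w) + inv(w)}. -/

import Mathlib

open Finset

/-- The canonical word of weight `ν`: `ν.get 0` letters `1`, then `ν.get 1` letters `2`, etc. -/
def canonicalWord (ν : List ℕ) : List ℕ :=
  (List.range ν.length).flatMap fun i => List.replicate (ν.getD i 0) (i + 1)

/-- The (finite) set of all words of weight `ν`, i.e. all rearrangements of the
canonical word of weight `ν`. -/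
def WordSet (ν : List ℕ) : Finset (List ℕ) :=
  (canonicalWord ν).permutations.toFinset

/-- The number of inversions of a word: pairs of positions `i < j` with `w i > w j`. -/
def invL : List ℕ → ℕ
  | [] => 0
  | a :: l => (l.countP fun b => decide (b < a)) + invL l

/-- The major index of a word: the sum of the (1-based) positions `i` with `w_i > w_{i+1}`. -/
def majL (w : List ℕ) : ℕ :=
  ∑ i ∈ Finset.range w.length,
    if w.getD (i + 1) 0 < w.getD i 0 ∧ i + 1 < w.length then i + 1 else 0

/-- The `q`-integer `[k]_q = 1 + q + ⋯ + q^{k-1}` as a rational function in `q = X`. -/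
noncomputable def qInt (k : ℕ) : RatFunc ℚ := ∑ i ∈ Finset.range k, RatFunc.X ^ i

/-- The `q`-factorial `[k]_q!`. -/
noncomputable def qFact (k : ℕ) : RatFunc ℚ := ∏ i ∈ Finset.range k, qInt (i + 1)

/-- The `q`-multinomial coefficient `[n choose ν]_q = [n]_q! / ([ν₁]_q! [ν₂]_q! ⋯)`
where `n = ν₁ + ν₂ + ⋯`. -/
noncomputable def qMultinomial (ν : List ℕ) : RatFunc ℚ :=
  qFact ν.sum / (ν.map qFact).prod

-- basics
lemma qInt_eq_algebraMap (k : ℕ) :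
    qInt k = algebraMap (Polynomial ℚ) (RatFunc ℚ) (∑ i ∈ Finset.range k, Polynomial.X ^ i) := by
  simp [qInt, map_sum, map_pow, RatFunc.algebraMap_X]

lemma qInt_ne_zero {k : ℕ} (hk : 0 < k) : qInt k ≠ 0 := by
  rw [qInt_eq_algebraMap]
  intro h
  have h0 : (∑ i ∈ Finset.range k, (Polynomial.X : Polynomial ℚ) ^ i) = 0 :=
    RatFunc.algebraMap_injective ℚ (by simpa using h)
  have := congrArg (Polynomial.eval 1) h0
  simp [Polynomial.eval_finset_sum] at this
  omega

lemma qFact_succ (k : ℕ) : qFact (k + 1) = qFact k * qInt (k + 1) := by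
  simp [qFact, Finset.prod_range_succ]

lemma qFact_ne_zero (k : ℕ) : qFact k ≠ 0 := by
  have : ∀ i ∈ Finset.range k, qInt (i + 1) ≠ 0 := fun i _ => qInt_ne_zero (Nat.succ_pos i)
  exact Finset.prod_ne_zero_iff.mpr this

lemma qInt_add (a b : ℕ) : qInt (a + b) = qInt a + RatFunc.X ^ a * qInt b := by
  rw [qInt, Finset.sum_range_add, qInt, qInt, Finset.mul_sum]
  congr 1
  exact Finset.sum_congr rfl fun i _ => by rw [pow_add]

lemma invL_append_singleton (u : List ℕ) (a : ℕ) :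
    invL (u ++ [a]) = invL u + u.countP (fun b => decide (a < b)) := by
  induction u with
  | nil => simp [invL]
  | cons x l ih =>
    show (List.countP _ (l ++ [a])) + invL (l ++ [a]) = _
    rw [List.countP_append, ih]
    show _ = (List.countP _ l) + invL l + List.countP _ (x :: l)
    rw [List.countP_cons]
    simp only [List.countP_cons, List.countP_nil]
    by_cases h : a < x <;> by_cases h2 : x < a <;> simp [h, h2] <;> omega

noncomputable def genF (c : List ℕ) : RatFunc ℚ :=
  ∑ w ∈ c.permutations.toFinset, RatFunc.X ^ invL w

noncomputable def Dfac (c : List ℕ) : RatFunc ℚ :=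
  ∏ a ∈ c.toFinset, qFact (c.count a)

lemma Dfac_ne_zero (c : List ℕ) : Dfac c ≠ 0 :=
  Finset.prod_ne_zero_iff.mpr fun a _ => qFact_ne_zero _

lemma perms_eq_biUnion {c : List ℕ} (hc : c ≠ []) :
    c.permutations.toFinset =
      c.toFinset.biUnion
        (fun a => ((c.erase a).permutations.toFinset).image (fun u => u ++ [a])) := by
  ext w
  simp only [Finset.mem_biUnion, Finset.mem_image, List.mem_toFinset, List.mem_permutations]
  constructor
  · intro hw
    have hwne : w ≠ [] := by
      intro h; subst h; exact hc hw.symm.eq_nil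
    refine ⟨w.getLast hwne, hw.mem_iff.mp (List.getLast_mem hwne), w.dropLast, ?_,
      List.dropLast_append_getLast hwne⟩
    have h1 : (w.dropLast ++ [w.getLast hwne]).Perm w := List.Perm.of_eq (List.dropLast_append_getLast hwne)
    have h2 : ((w.getLast hwne) :: w.dropLast).Perm w :=
      ((List.perm_append_singleton _ _).symm.trans h1)
    have h3 : w.Perm ((w.getLast hwne) :: (c.erase (w.getLast hwne))) :=
      hw.trans (List.perm_cons_erase (hw.mem_iff.mp (List.getLast_mem hwne)))
    exact (List.perm_cons _).mp (h2.trans h3)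
  · rintro ⟨a, ha, u, hu, rfl⟩
    exact (List.perm_append_singleton a u).trans ((hu.cons a).trans (List.perm_cons_erase ha).symm)

lemma countP_gt_erase {c : List ℕ} {a : ℕ} (ha : a ∈ c) :
    (c.erase a).countP (fun b => decide (a < b)) = c.countP (fun b => decide (a < b)) := by
  have := (List.perm_cons_erase ha).countP_eq (fun b => decide (a < b))
  rw [this, List.countP_cons]
  simp

lemma genF_rec {c : List ℕ} (hc : c ≠ []) :
    genF c = ∑ a ∈ c.toFinset,
      RatFunc.X ^ (c.countP fun b => decide (a < b)) * genF (c.erase a) := by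
  rw [genF, perms_eq_biUnion hc, Finset.sum_biUnion]
  · refine Finset.sum_congr rfl fun a _ => ?_
    rw [Finset.sum_image (fun x _ y _ h => List.append_cancel_right h)]
    rw [genF, Finset.mul_sum]
    refine Finset.sum_congr rfl fun u hu => ?_
    rw [invL_append_singleton, pow_add]
    have hu' : u.Perm (c.erase a) := List.mem_permutations.mp (List.mem_toFinset.mp hu)
    rw [hu'.countP_eq, countP_gt_erase (List.mem_toFinset.mp ‹a ∈ c.toFinset›)]
    ring
  · intro a ha b hb hab
    simp only [Function.onFun]
    rw [Finset.disjoint_left]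
    rintro w hwa hwb
    simp only [Finset.mem_image] at hwa hwb
    obtain ⟨u, _, rfl⟩ := hwa
    obtain ⟨v, _, hv⟩ := hwb
    apply hab
    have := congrArg List.getLast? hv
    rw [List.getLast?_concat, List.getLast?_concat] at this
    exact (Option.some_inj.mp this).symm

lemma length_eq_sum_count (l : List ℕ) : l.length = ∑ b ∈ l.toFinset, l.count b := by
  have := Multiset.toFinset_sum_count_eq (l : Multiset ℕ)
  simpa using this.symm

lemma countP_eq_sum (c : List ℕ) (p : ℕ → Bool) :
    c.countP p = ∑ b ∈ c.toFinset, if p b then c.count b else 0 := by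
  rw [List.countP_eq_length_filter, length_eq_sum_count]
  have h1 : ∀ b ∈ (c.filter p).toFinset, (c.filter p).count b = if p b then c.count b else 0 := by
    intro b hb
    have hpb : p b = true := List.of_mem_filter (List.mem_toFinset.mp hb)
    rw [List.count_filter hpb, if_pos hpb]
  rw [Finset.sum_congr rfl h1]
  refine Finset.sum_subset ?_ ?_
  · intro b hb
    exact List.mem_toFinset.mpr (List.mem_of_mem_filter (List.mem_toFinset.mp hb))
  · intro b hb hnb
    have : ¬ p b = true := by
      intro hpb
      exact hnb (List.mem_toFinset.mpr (List.mem_filter.mpr ⟨List.mem_toFinset.mp hb, hpb⟩))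
    rw [if_neg this]

lemma key_sum (s : Finset ℕ) (f : ℕ → ℕ) :
    ∑ a ∈ s, RatFunc.X ^ (∑ b ∈ s.filter (fun b => a < b), f b) * qInt (f a)
      = qInt (∑ b ∈ s, f b) := by
  induction s using Finset.induction_on_max with
  | empty => simp [qInt]
  | insert a s hmax ih =>
    have has : a ∉ s := fun h => lt_irrefl a (hmax a h)
    rw [Finset.sum_insert has, Finset.sum_insert has, qInt_add]
    have h1 : (insert a s).filter (fun b => a < b) = ∅ := by
      rw [Finset.filter_eq_empty_iff]
      intro b hb
      rcases Finset.mem_insert.mp hb with rfl | hb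
      · exact lt_irrefl b
      · exact not_lt_of_gt (hmax b hb)
    have h2 : ∀ x ∈ s, (insert a s).filter (fun b => x < b)
        = insert a (s.filter (fun b => x < b)) := by
      intro x hx
      rw [Finset.filter_insert, if_pos (hmax x hx)]
    rw [h1]
    simp only [Finset.sum_empty, pow_zero, one_mul]
    congr 1
    rw [← ih, Finset.mul_sum]
    refine Finset.sum_congr rfl fun x hx => ?_
    rw [h2 x hx, Finset.sum_insert (fun h => has (Finset.mem_filter.mp h).1), pow_add]
    ring

lemma Dfac_erase {c : List ℕ} {a : ℕ} (ha : a ∈ c) :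
    Dfac c = Dfac (c.erase a) * qInt (c.count a) := by
  have hsub : (c.erase a).toFinset ⊆ c.toFinset := by
    intro b hb
    exact List.mem_toFinset.mpr (List.mem_of_mem_erase (List.mem_toFinset.mp hb))
  have hD : Dfac (c.erase a) = ∏ b ∈ c.toFinset, qFact ((c.erase a).count b) := by
    refine Finset.prod_subset hsub ?_
    intro b _ hnb
    have : (c.erase a).count b = 0 := by
      rw [List.count_eq_zero]
      intro hmem
      exact hnb (List.mem_toFinset.mpr hmem)
    rw [this]
    simp [qFact]
  have haf : a ∈ c.toFinset := List.mem_toFinset.mpr ha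
  rw [Dfac, ← Finset.mul_prod_erase _ _ haf, hD, ← Finset.mul_prod_erase _ _ haf]
  have hcount : ∀ b ∈ c.toFinset.erase a, qFact ((c.erase a).count b) = qFact (c.count b) := by
    intro b hb
    rw [List.count_erase_of_ne (Finset.mem_erase.mp hb).1]
  rw [Finset.prod_congr rfl hcount, List.count_erase_self]
  have hpos : 0 < c.count a := List.count_pos_iff.mpr ha
  have : qFact (c.count a) = qFact (c.count a - 1) * qInt (c.count a) := by
    conv_lhs => rw [show c.count a = (c.count a - 1) + 1 by omega]
    rw [qFact_succ, show c.count a - 1 + 1 = c.count a by omega]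
  rw [this]
  ring

lemma macmahon : ∀ (n : ℕ) (c : List ℕ), c.length = n → genF c * Dfac c = qFact c.length := by
  intro n
  induction n using Nat.strong_induction_on with
  | _ n ih =>
    intro c hlen
    by_cases hc0' : c = []
    · subst hc0'; simp [genF, Dfac, invL, qFact]
    · have hc0 : c ≠ [] := hc0'
      have hlpos : 0 < c.length := List.length_pos_iff.mpr hc0
      rw [genF_rec hc0, Finset.sum_mul]
      have hterm : ∀ x ∈ c.toFinset,
          RatFunc.X ^ (c.countP fun b => decide (x < b)) * genF (c.erase x) * Dfac c
          = RatFunc.X ^ (c.countP fun b => decide (x < b)) * qFact (c.length - 1)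
              * qInt (c.count x) := by
        intro x hx
        have hxc : x ∈ c := List.mem_toFinset.mp hx
        have hlen_erase : (c.erase x).length = c.length - 1 := List.length_erase_of_mem hxc
        have hIH : genF (c.erase x) * Dfac (c.erase x) = qFact (c.erase x).length := by
          refine ih (c.erase x).length ?_ _ rfl
          omega
        rw [Dfac_erase hxc, hlen_erase] at *
        calc RatFunc.X ^ (c.countP fun b => decide (x < b)) * genF (c.erase x)
              * (Dfac (c.erase x) * qInt (c.count x))
            = RatFunc.X ^ (c.countP fun b => decide (x < b))
                * (genF (c.erase x) * Dfac (c.erase x)) * qInt (c.count x) := by ring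
          _ = _ := by rw [hIH, hlen_erase]
      rw [Finset.sum_congr rfl hterm]
      have hexp : ∀ x : ℕ, (c.countP fun b => decide (x < b))
          = ∑ b ∈ c.toFinset.filter (fun b => x < b), c.count b := by
        intro x
        rw [countP_eq_sum, Finset.sum_filter]
        simp
      have : ∑ x ∈ c.toFinset,
          RatFunc.X ^ (c.countP fun b => decide (x < b)) * qFact (c.length - 1) * qInt (c.count x)
          = qFact (c.length - 1) * ∑ x ∈ c.toFinset,
              RatFunc.X ^ (∑ b ∈ c.toFinset.filter (fun b => x < b), c.count b) * qInt (c.count x) := by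
        rw [Finset.mul_sum]
        exact Finset.sum_congr rfl fun x _ => by rw [hexp x]; ring
      rw [this, key_sum, ← length_eq_sum_count]
      conv_rhs => rw [show c.length = (c.length - 1) + 1 by omega]
      rw [qFact_succ, show c.length - 1 + 1 = c.length by omega]

-- translations between ν and canonical word
lemma list_sum_eq (ν : List ℕ) : ν.sum = ∑ i ∈ Finset.range ν.length, ν.getD i 0 := by
  induction ν with
  | nil => simp
  | cons x l ih =>
    rw [List.sum_cons, List.length_cons, Finset.sum_range_succ', ih]
    simp [add_comm]

lemma list_prod_eq {M : Type*} [CommMonoid M] (ν : List ℕ) (f : ℕ → M) :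
    (ν.map f).prod = ∏ i ∈ Finset.range ν.length, f (ν.getD i 0) := by
  induction ν with
  | nil => simp
  | cons x l ih =>
    rw [List.map_cons, List.prod_cons, List.length_cons, Finset.prod_range_succ', ih]
    simp [mul_comm]

lemma count_flatMap_range (g : ℕ → List ℕ) (m a : ℕ) :
    ((List.range m).flatMap g).count a = ∑ j ∈ Finset.range m, (g j).count a := by
  induction m with
  | zero => simp
  | succ m ih =>
    rw [List.range_succ, List.flatMap_append, List.count_append, ih, Finset.sum_range_succ]
    simp

lemma length_flatMap_range (g : ℕ → List ℕ) (m : ℕ) :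
    ((List.range m).flatMap g).length = ∑ j ∈ Finset.range m, (g j).length := by
  induction m with
  | zero => simp
  | succ m ih =>
    rw [List.range_succ, List.flatMap_append, List.length_append, ih, Finset.sum_range_succ]
    simp

lemma canonicalWord_length (ν : List ℕ) : (canonicalWord ν).length = ν.sum := by
  rw [canonicalWord, length_flatMap_range, list_sum_eq]
  simp

lemma canonicalWord_count {ν : List ℕ} {i : ℕ} (hi : i < ν.length) :
    (canonicalWord ν).count (i + 1) = ν.getD i 0 := by
  rw [canonicalWord, count_flatMap_range]
  rw [Finset.sum_eq_single i]
  · simp [List.count_replicate]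
  · intro j _ hji
    rw [List.count_replicate, if_neg (by simp; omega)]
  · intro h
    exact absurd (Finset.mem_range.mpr hi) h

lemma canonicalWord_mem {ν : List ℕ} {a : ℕ} :
    a ∈ canonicalWord ν ↔ ∃ i, i < ν.length ∧ 0 < ν.getD i 0 ∧ a = i + 1 := by
  simp only [canonicalWord, List.mem_flatMap, List.mem_range, List.mem_replicate]
  constructor
  · rintro ⟨i, hi, hrep, rfl⟩
    exact ⟨i, hi, Nat.pos_of_ne_zero hrep, rfl⟩
  · rintro ⟨i, hi, hpos, rfl⟩
    exact ⟨i, hi, Nat.pos_iff_ne_zero.mp hpos, rfl⟩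

lemma Dfac_canonical (ν : List ℕ) : Dfac (canonicalWord ν) = (ν.map qFact).prod := by
  rw [list_prod_eq]
  set c := canonicalWord ν
  have himg : c.toFinset =
      ((Finset.range ν.length).filter (fun i => 0 < ν.getD i 0)).image (· + 1) := by
    ext a
    simp only [List.mem_toFinset, Finset.mem_image, Finset.mem_filter, Finset.mem_range]
    rw [canonicalWord_mem]
    constructor
    · rintro ⟨i, h1, h2, rfl⟩; exact ⟨i, ⟨h1, h2⟩, rfl⟩
    · rintro ⟨i, ⟨h1, h2⟩, rfl⟩; exact ⟨i, h1, h2, rfl⟩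
  have hinj : ∀ x ∈ (Finset.range ν.length).filter (fun i => 0 < ν.getD i 0), ∀ y ∈ (Finset.range ν.length).filter (fun i => 0 < ν.getD i 0), x + 1 = y + 1 → x = y := by
    intro x _ y _ h; omega
  rw [Dfac, himg, Finset.prod_image hinj]
  have hcong : ∀ i ∈ (Finset.range ν.length).filter (fun i => 0 < ν.getD i 0),
      qFact (c.count (i + 1)) = qFact (ν.getD i 0) := fun i hi => by
    rw [canonicalWord_count (Finset.mem_range.mp (Finset.mem_filter.mp hi).1)]
  rw [show (∏ i ∈ (Finset.range ν.length).filter (fun i => 0 < ν.getD i 0), qFact (c.count (i + 1)))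
      = ∏ i ∈ (Finset.range ν.length).filter (fun i => 0 < ν.getD i 0), qFact (ν.getD i 0)
    from Finset.prod_congr rfl hcong]
  refine Finset.prod_subset (Finset.filter_subset _ _) ?_
  intro i _ hni
  have : ν.getD i 0 = 0 := by
    by_contra h
    exact hni (Finset.mem_filter.mpr ⟨‹i ∈ Finset.range ν.length›, Nat.pos_of_ne_zero h⟩)
  rw [this]
  simp [qFact]

lemma qMultinomial_eq_genF (ν : List ℕ) : qMultinomial ν = genF (canonicalWord ν) := by
  rw [qMultinomial, ← Dfac_canonical, ← canonicalWord_length,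
    ← macmahon (canonicalWord ν).length _ rfl]
  field_simp [Dfac_ne_zero]

lemma cross_qInt (k l : ℕ) :
    RatFunc.X ^ k * qInt l + qInt k = qInt l + RatFunc.X ^ l * qInt k := by
  have h1 : qInt k * (RatFunc.X - 1) = RatFunc.X ^ k - 1 := by
    rw [qInt]; exact geom_sum_mul _ _
  have h2 : qInt l * (RatFunc.X - 1) = RatFunc.X ^ l - 1 := by
    rw [qInt]; exact geom_sum_mul _ _
  linear_combination qInt k * h2 - qInt l * h1

lemma genF_step {c : List ℕ} {a : ℕ} (ha : a ∈ c) :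
    RatFunc.X ^ (c.count a) * genF c + genF (c.erase a)
      = genF c + RatFunc.X ^ c.length * genF (c.erase a) := by
  have hc0 : c ≠ [] := List.ne_nil_of_mem ha
  have hm1 := macmahon c.length c rfl
  have hm2 := macmahon (c.erase a).length _ rfl
  have hle : (c.erase a).length = c.length - 1 := List.length_erase_of_mem ha
  have hlpos : 0 < c.length := List.length_pos_iff.mpr hc0
  have hD : Dfac c = Dfac (c.erase a) * qInt (c.count a) := Dfac_erase ha
  have hq : qFact c.length = qFact (c.length - 1) * qInt c.length := by
    conv_lhs => rw [show c.length = (c.length - 1) + 1 by omega]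
    rw [qFact_succ, show c.length - 1 + 1 = c.length by omega]
  have hDne := Dfac_ne_zero c
  have e1 : genF (c.erase a) * Dfac c = qFact (c.length - 1) * qInt (c.count a) := by
    rw [hD, ← mul_assoc, hm2, hle]
  have key := cross_qInt (c.count a) c.length
  refine mul_right_cancel₀ hDne ?_
  calc (RatFunc.X ^ c.count a * genF c + genF (c.erase a)) * Dfac c
      = RatFunc.X ^ c.count a * (genF c * Dfac c) + genF (c.erase a) * Dfac c := by ring
    _ = RatFunc.X ^ c.count a * qFact c.length + qFact (c.length - 1) * qInt (c.count a) := by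
        rw [hm1, e1]
    _ = qFact c.length + RatFunc.X ^ c.length * (qFact (c.length - 1) * qInt (c.count a)) := by
        rw [hq]; linear_combination qFact (c.length - 1) * key
    _ = (genF c + RatFunc.X ^ c.length * genF (c.erase a)) * Dfac c := by
        rw [← hm1, ← e1]; ring

noncomputable def pGen (c : List ℕ) : Polynomial ℚ :=
  ∑ w ∈ c.permutations.toFinset, Polynomial.X ^ invL w

lemma algebraMap_pGen (c : List ℕ) :
    algebraMap (Polynomial ℚ) (RatFunc ℚ) (pGen c) = genF c := by
  simp [pGen, genF, map_sum, map_pow, RatFunc.algebraMap_X]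

lemma pGen_step {c : List ℕ} {a : ℕ} (ha : a ∈ c) :
    Polynomial.X ^ (c.count a) * pGen c + pGen (c.erase a)
      = pGen c + Polynomial.X ^ c.length * pGen (c.erase a) := by
  apply RatFunc.algebraMap_injective ℚ
  simp only [map_add, map_mul, map_pow, RatFunc.algebraMap_X, algebraMap_pGen]
  exact genF_step ha

lemma aeval_pGen (n : ℕ) (c : List ℕ) :
    Polynomial.aeval (AddMonoidAlgebra.single (1 : ZMod n) (1 : ℚ)) (pGen c)
      = ∑ w ∈ c.permutations.toFinset,
          AddMonoidAlgebra.single ((invL w : ZMod n)) (1 : ℚ) := by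
  rw [pGen, map_sum]
  refine Finset.sum_congr rfl fun w _ => ?_
  rw [map_pow, Polynomial.aeval_X, AddMonoidAlgebra.single_pow]
  congr 1
  · rw [nsmul_eq_mul, mul_one]
  · rw [one_pow]

lemma cnt_shift {c : List ℕ} {a : ℕ} (ha : a ∈ c) (r : ZMod c.length) :
    ((c.permutations.toFinset).filter
        (fun w => (invL w : ZMod c.length) = r - (c.count a : ZMod c.length))).card
      = ((c.permutations.toFinset).filter (fun w => (invL w : ZMod c.length) = r)).card := by
  have hstep := congrArg (Polynomial.aeval (AddMonoidAlgebra.single (1 : ZMod c.length) (1 : ℚ)))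
    (pGen_step ha)
  rw [map_add, map_add, map_mul, map_mul, map_pow, map_pow, Polynomial.aeval_X,
    AddMonoidAlgebra.single_pow, AddMonoidAlgebra.single_pow, aeval_pGen, aeval_pGen] at hstep
  have hn : ((c.length : ℕ) • (1 : ZMod c.length)) = 0 := by
    rw [nsmul_eq_mul, mul_one]; exact ZMod.natCast_self c.length
  have hk : ((c.count a : ℕ) • (1 : ZMod c.length)) = ((c.count a : ℕ) : ZMod c.length) := by
    rw [nsmul_eq_mul, mul_one]
  rw [hn, hk, one_pow, one_pow, ← AddMonoidAlgebra.one_def, one_mul] at hstep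
  have hS : (AddMonoidAlgebra.single ((c.count a : ℕ) : ZMod c.length) (1 : ℚ))
        * (∑ w ∈ c.permutations.toFinset, AddMonoidAlgebra.single ((invL w : ZMod c.length)) (1 : ℚ))
      = ∑ w ∈ c.permutations.toFinset, AddMonoidAlgebra.single ((invL w : ZMod c.length)) (1 : ℚ) :=
    add_right_cancel hstep
  rw [Finset.mul_sum] at hS
  have hS2 : ∀ w, (AddMonoidAlgebra.single ((c.count a : ℕ) : ZMod c.length) (1 : ℚ))
      * (AddMonoidAlgebra.single ((invL w : ZMod c.length)) (1 : ℚ))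
      = AddMonoidAlgebra.single (((c.count a : ℕ) : ZMod c.length) + (invL w : ZMod c.length)) (1 : ℚ) := by
    intro w
    rw [AddMonoidAlgebra.single_mul_single, mul_one]
  simp only [hS2] at hS
  have happ := congrArg (fun F : AddMonoidAlgebra ℚ (ZMod c.length) => F.coeff r) hS
  rw [AddMonoidAlgebra.coeff_sum, AddMonoidAlgebra.coeff_sum, Finset.sum_apply', Finset.sum_apply'] at happ
  simp only [AddMonoidAlgebra.coeff_single, Finsupp.single_apply] at happ
  have hl : ∑ w ∈ c.permutations.toFinset,
      (if ((c.count a : ℕ) : ZMod c.length) + (invL w : ZMod c.length) = r then (1:ℚ) else 0)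
      = ∑ w ∈ c.permutations.toFinset,
      (if (invL w : ZMod c.length) = r - ((c.count a : ℕ) : ZMod c.length) then (1:ℚ) else 0) := by
    refine Finset.sum_congr rfl fun w _ => ?_
    congr 1
    simp only [eq_iff_iff]
    rw [eq_sub_iff_add_eq']
  rw [hl] at happ
  rw [Finset.sum_boole, Finset.sum_boole] at happ
  exact_mod_cast happ

lemma reindex_exists (c : List ℕ) (K : ℤ)
    (hK : ∀ r : ZMod c.length,
      ((c.permutations.toFinset).filter
          (fun w => (invL w : ZMod c.length) = r - ((K : ℤ) : ZMod c.length))).card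
        = ((c.permutations.toFinset).filter
            (fun w => (invL w : ZMod c.length) = r)).card) :
    ∃ h : List ℕ → ℤ,
      ∑ w ∈ c.permutations.toFinset, (RatFunc.X : RatFunc ℚ) ^ (K + (invL w : ℤ))
        = ∑ w ∈ c.permutations.toFinset,
            (RatFunc.X : RatFunc ℚ) ^ ((c.length : ℤ) * h w + (invL w : ℤ)) := by
  classical
  set W := c.permutations.toFinset with hW
  set Kb : ZMod c.length := ((K : ℤ) : ZMod c.length) with hKb
  set fib : ZMod c.length → Finset (List ℕ) :=
    fun r => W.filter (fun w => (invL w : ZMod c.length) = r) with hfib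
  have hcard : ∀ r, (fib r).card = (fib (r - Kb)).card := fun r => (hK r).symm
  set E : (r : ZMod c.length) → {x // x ∈ fib r} ≃ {x // x ∈ fib (r - Kb)} :=
    fun r => Finset.equivOfCardEq (hcard r) with hE
  have memfib : ∀ {w r}, w ∈ fib r ↔ w ∈ W ∧ (invL w : ZMod c.length) = r := by
    intro w r; rw [hfib]; exact Finset.mem_filter
  set τ : List ℕ → List ℕ := fun w =>
    if hw : w ∈ W then (E ((invL w : ZMod c.length)) ⟨w, memfib.mpr ⟨hw, rfl⟩⟩).1 else w with hτ
  set σ : List ℕ → List ℕ := fun w =>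
    if hw : w ∈ W then
      ((E ((invL w : ZMod c.length) + Kb)).symm
        ⟨w, memfib.mpr ⟨hw, (add_sub_cancel_right _ _).symm⟩⟩).1
    else w with hσ
  -- basic membership/residue facts
  have hτfib : ∀ {w} (hw : w ∈ W), τ w ∈ fib ((invL w : ZMod c.length) - Kb) := by
    intro w hw
    rw [hτ]; simp only [dif_pos hw]
    exact (E ((invL w : ZMod c.length)) ⟨w, memfib.mpr ⟨hw, rfl⟩⟩).2
  have hσfib : ∀ {w} (hw : w ∈ W), σ w ∈ fib ((invL w : ZMod c.length) + Kb) := by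
    intro w hw
    rw [hσ]; simp only [dif_pos hw]
    exact ((E ((invL w : ZMod c.length) + Kb)).symm
      ⟨w, memfib.mpr ⟨hw, (add_sub_cancel_right _ _).symm⟩⟩).2
  have hτW : ∀ {w}, w ∈ W → τ w ∈ W := fun hw => (memfib.mp (hτfib hw)).1
  have hσW : ∀ {w}, w ∈ W → σ w ∈ W := fun hw => (memfib.mp (hσfib hw)).1
  have hτres : ∀ {w} (hw : w ∈ W), (invL (τ w) : ZMod c.length) = (invL w : ZMod c.length) - Kb :=
    fun hw => (memfib.mp (hτfib hw)).2
  have hσres : ∀ {w} (hw : w ∈ W), (invL (σ w) : ZMod c.length) = (invL w : ZMod c.length) + Kb :=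
    fun hw => (memfib.mp (hσfib hw)).2
  have hστ : ∀ w ∈ W, σ (τ w) = w := by
    intro w hw
    have hvW : τ w ∈ W := hτW hw
    have hres := hτres hw
    have hidx : (invL (τ w) : ZMod c.length) + Kb = (invL w : ZMod c.length) := by
      rw [hres, sub_add_cancel]
    rw [hσ]
    simp only [dif_pos hvW]
    have hgen : ∀ (s : ZMod c.length) (hs : s = (invL w : ZMod c.length))
        (p : τ w ∈ fib (s - Kb)),
        ((E s).symm ⟨τ w, p⟩).1 = w := by
      rintro s rfl p
      have hval : (⟨τ w, p⟩ : {x // x ∈ fib ((invL w : ZMod c.length) - Kb)})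
          = E ((invL w : ZMod c.length)) ⟨w, memfib.mpr ⟨hw, rfl⟩⟩ := by
        apply Subtype.ext
        show τ w = _
        rw [hτ]
        exact dif_pos hw
      rw [hval, Equiv.symm_apply_apply]
    exact hgen _ hidx _
  have hτσ : ∀ w ∈ W, τ (σ w) = w := by
    intro w hw
    have hvW : σ w ∈ W := hσW hw
    have hres := hσres hw
    rw [hτ]
    simp only [dif_pos hvW]
    have hgen : ∀ (s : ZMod c.length) (hs : s = (invL w : ZMod c.length) + Kb)
        (p : σ w ∈ fib s),
        (E s ⟨σ w, p⟩).1 = w := by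
      rintro s rfl p
      have hval : (⟨σ w, p⟩ : {x // x ∈ fib ((invL w : ZMod c.length) + Kb)})
          = (E ((invL w : ZMod c.length) + Kb)).symm
              ⟨w, memfib.mpr ⟨hw, (add_sub_cancel_right _ _).symm⟩⟩ := by
        apply Subtype.ext
        show σ w = _
        rw [hσ]
        exact dif_pos hw
      rw [hval, Equiv.apply_symm_apply]
    exact hgen _ (hres) _
  refine ⟨fun v => (K + (invL (τ v) : ℤ) - (invL v : ℤ)) / (c.length : ℤ), ?_⟩
  refine Finset.sum_nbij' σ τ (fun w hw => hσW hw) (fun w hw => hτW hw)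
    (fun w hw => hτσ w hw) (fun w hw => hστ w hw) ?_
  intro w hw
  congr 1
  have hτσw : τ (σ w) = w := hτσ w hw
  show K + (invL w : ℤ)
      = (c.length : ℤ) * ((K + (invL (τ (σ w)) : ℤ) - (invL (σ w) : ℤ)) / (c.length : ℤ))
        + (invL (σ w) : ℤ)
  rw [hτσw]
  have hdvd : (c.length : ℤ) ∣ (K + (invL w : ℤ) - (invL (σ w) : ℤ)) := by
    rw [← ZMod.intCast_zmod_eq_zero_iff_dvd]
    push_cast
    rw [hσres hw]
    push_cast [hKb]
    ring
  rw [Int.mul_ediv_cancel' hdvd]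
  ring

noncomputable def stabSub (c : List ℕ) : AddSubgroup (ZMod c.length) where
  carrier := {x | ∀ r : ZMod c.length,
    ((c.permutations.toFinset).filter (fun w => (invL w : ZMod c.length) = r - x)).card
      = ((c.permutations.toFinset).filter (fun w => (invL w : ZMod c.length) = r)).card}
  zero_mem' := fun r => by rw [sub_zero]
  add_mem' := by
    intro x y hx hy r
    have e : r - (x + y) = (r - y) - x := by ring
    rw [e, hx (r - y), hy r]
  neg_mem' := by
    intro x hx r
    have e : r + x - x = r := by ring
    have h2 := hx (r + x)
    rw [e] at h2
    rw [sub_neg_eq_add]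
    exact h2.symm

lemma count_mem_stab {c : List ℕ} {a : ℕ} (ha : a ∈ c) :
    ((c.count a : ℕ) : ZMod c.length) ∈ stabSub c :=
  fun r => cnt_shift ha r

theorem stmt4' (ν : List ℕ) (ks : List ℤ) (hk : ks.length = ν.length) :
    ∃ h : List ℕ → ℤ,
      (RatFunc.X : RatFunc ℚ) ^ (∑ i ∈ Finset.range ν.length, ks.getD i 0 * (ν.getD i 0 : ℤ))
          * qMultinomial ν
        = ∑ w ∈ WordSet ν, (RatFunc.X : RatFunc ℚ) ^ ((ν.sum : ℤ) * h w + invL w) := by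
  classical
  set c := canonicalWord ν with hc
  set K : ℤ := ∑ i ∈ Finset.range ν.length, ks.getD i 0 * (ν.getD i 0 : ℤ) with hKdef
  have hlen : c.length = ν.sum := canonicalWord_length ν
  have hgen : ∀ i ∈ Finset.range ν.length,
      ((ν.getD i 0 : ℕ) : ZMod c.length) ∈ stabSub c := by
    intro i hi
    rcases Nat.eq_zero_or_pos (ν.getD i 0) with h0 | hpos
    · rw [h0, Nat.cast_zero]
      exact (stabSub c).zero_mem
    · have hmem : (i + 1) ∈ c := canonicalWord_mem.mpr ⟨i, Finset.mem_range.mp hi, hpos, rfl⟩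
      have hcount : c.count (i + 1) = ν.getD i 0 := canonicalWord_count (Finset.mem_range.mp hi)
      rw [← hcount]
      exact count_mem_stab hmem
  have hKmem : ((K : ℤ) : ZMod c.length) ∈ stabSub c := by
    rw [hKdef]
    push_cast
    refine AddSubgroup.sum_mem _ ?_
    intro i hi
    rw [← zsmul_eq_mul]
    exact AddSubgroup.zsmul_mem _ (hgen i hi) _
  obtain ⟨h, hh⟩ := reindex_exists c K hKmem
  rw [hlen] at hh
  refine ⟨h, ?_⟩
  rw [qMultinomial_eq_genF, ← hc, genF, Finset.mul_sum,
    show WordSet ν = c.permutations.toFinset from rfl, ← hh]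
  refine Finset.sum_congr rfl fun w _ => ?_
  rw [← zpow_natCast (RatFunc.X : RatFunc ℚ) (invL w),
    ← zpow_add₀ (RatFunc.X_ne_zero : (RatFunc.X : RatFunc ℚ) ≠ 0)]

/-- For any composition `ν = (ν₁,…,ν_m)` of `n` and integers `k₁,…,k_m` there is a
statistic `h` on words of weight `ν` such that
`q^{k₁ν₁ + ⋯ + k_mν_m} [n choose ν]_q = Σ_w q^{n·h(w) + inv(w)}`. -/
theorem stmt4 (ν : List ℕ) (ks : List ℤ) (hk : ks.length = ν.length) :
    ∃ h : List ℕ → ℤ,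
      (RatFunc.X : RatFunc ℚ) ^ (∑ i ∈ Finset.range ν.length, ks.getD i 0 * (ν.getD i 0 : ℤ))
          * qMultinomial ν
        = ∑ w ∈ WordSet ν, (RatFunc.X : RatFunc ℚ) ^ ((ν.sum : ℤ) * h w + invL w) :=
  stmt4' ν ks hk
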